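/- For d_1,...,d_n ∈ [0,1) and 1 ≤ k ≤ n−1, setting x_j = 1/(1−d_j), the quantity ((Σ_{j=1}^k x_j)^2 − Σ_{j=1}^k x_j^2)/(2 Σ_{j=1}^k x_j) + Σ_{j=k+1}^n x_j is strictly greater than ((Σ_{j=1}^n x_j)^2 − Σ_{j=1}^n x_j^2)/(2 Σ_{j=1}^n x_j). Hence among completions whose directed graph has a single cycle of length k < n through states 1,...,k, Kemeny's constant strictly exceeds the value attained by a full n-cycle. -/

import Mathlib

open Finset

theorem short_cycle_exceeds_full_cycle
    (n k : ℕ) (hn : 2 ≤ n) (hk : 1 ≤ k) (hkn : k ≤ n - 1)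
    (d : ℕ → ℝ) (hd : ∀ j, 1 ≤ j → j ≤ n → 0 ≤ d j ∧ d j < 1)
    (x : ℕ → ℝ) (hx : ∀ j, x j = (1 - d j)⁻¹) :
    ((∑ j ∈ Finset.Icc 1 n, x j) ^ 2 - ∑ j ∈ Finset.Icc 1 n, (x j) ^ 2) /
        (2 * ∑ j ∈ Finset.Icc 1 n, x j) <
      ((∑ j ∈ Finset.Icc 1 k, x j) ^ 2 - ∑ j ∈ Finset.Icc 1 k, (x j) ^ 2) /
        (2 * ∑ j ∈ Finset.Icc 1 k, x j) +
      ∑ j ∈ Finset.Icc (k + 1) n, x j := by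
  have hkn' : k + 1 ≤ n := by omega
  have hxpos : ∀ j ∈ Finset.Icc 1 n, 0 < x j := by
    intro j hj
    simp only [Finset.mem_Icc] at hj
    obtain ⟨h0, h1⟩ := hd j hj.1 hj.2
    rw [hx j]
    have : 0 < 1 - d j := by linarith
    positivity
  -- split the sums
  have hsplit : ∀ f : ℕ → ℝ,
      (∑ j ∈ Finset.Icc 1 n, f j)
        = (∑ j ∈ Finset.Icc 1 k, f j) + ∑ j ∈ Finset.Icc (k+1) n, f j := by
    intro f
    have h1 : Finset.Icc 1 n = Finset.Ioc 0 n := by rw [← Finset.Icc_add_one_left_eq_Ioc, zero_add]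
    have h2 : Finset.Icc 1 k = Finset.Ioc 0 k := by rw [← Finset.Icc_add_one_left_eq_Ioc, zero_add]
    have h3 : Finset.Icc (k+1) n = Finset.Ioc k n := by rw [← Finset.Icc_add_one_left_eq_Ioc]
    rw [h1, h2, h3, Finset.sum_Ioc_consecutive f (Nat.zero_le k) (by omega)]
  set A := ∑ j ∈ Finset.Icc 1 k, x j with hA
  set B := ∑ j ∈ Finset.Icc 1 k, (x j) ^ 2 with hB
  set C := ∑ j ∈ Finset.Icc (k+1) n, x j with hC
  set D := ∑ j ∈ Finset.Icc (k+1) n, (x j) ^ 2 with hD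
  rw [hsplit x, hsplit (fun j => (x j)^2)]
  have hApos : 0 < A := by
    apply Finset.sum_pos
    · intro j hj
      exact hxpos j (by simp only [Finset.mem_Icc] at hj ⊢; omega)
    · exact ⟨1, by simp [hk]⟩
  have hCpos : 0 < C := by
    apply Finset.sum_pos
    · intro j hj
      exact hxpos j (by simp only [Finset.mem_Icc] at hj ⊢; omega)
    · exact ⟨k+1, by simp [hkn']⟩
  have hDpos : 0 < D := by
    apply Finset.sum_pos
    · intro j hj
      have := hxpos j (by simp only [Finset.mem_Icc] at hj ⊢; omega)
      positivity
    · exact ⟨k+1, by simp [hkn']⟩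
  have hBA : B ≤ A ^ 2 := by
    rw [hA, hB]
    exact Finset.sum_sq_le_sq_sum_of_nonneg (fun i hi => le_of_lt
      (hxpos i (by simp only [Finset.mem_Icc] at hi ⊢; omega)))
  rw [div_add' _ _ _ (by positivity), div_lt_div_iff₀ (by positivity) (by positivity)]
  nlinarith [mul_pos hApos hCpos, mul_pos hCpos hCpos, mul_pos hApos hDpos,
    mul_nonneg hCpos.le (sub_nonneg.mpr hBA), sq_nonneg (A - C)]
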